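/- Let q ≥ 3 be an integer, let G = (V,E) be a graph with list function L : V → P([q]), let u₁, u₂ ∈ V be distinct vertices, let α ∈ [q], and let β, γ be distinct elements of [q] \ {α}. Form a graph G' by adding three new vertices v₁, v₂, v₃ forming a path u₁-v₁-v₂-v₃-u₂, and extend L by L'(v₁) = {α, β}, L'(v₂) = {β, γ}, L'(v₃) = {α, γ}. Then for every proper list-coloring c of (G, L), c can be extended to a proper list-coloring of (G', L') if and only if (c(u₁), c(u₂)) ≠ (α, α). -/
import Mathlib


/-- A proper list-coloring of `(G, L)`. -/
def ProperListColoring {V : Type*} {q : ℕ} (G : SimpleGraph V) (L : V → Set (Fin q))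
    (c : V → Fin q) : Prop :=
  (∀ v, c v ∈ L v) ∧ ∀ u v, G.Adj u v → c u ≠ c v

/-- Gadget for equal forbidden colors: adding a path `u₁ - v₁ - v₂ - v₃ - u₂` with lists
`{α,β}`, `{β,γ}`, `{α,γ}` forbids exactly the color pair `(α, α)` on `(u₁, u₂)`. -/
theorem stmt5 {V : Type*} (q : ℕ) (hq : 3 ≤ q) (G : SimpleGraph V) (L : V → Set (Fin q))
    (u₁ u₂ : V) (hu : u₁ ≠ u₂) (α β γ : Fin q) (hβγ : β ≠ γ)
    (hβα : β ≠ α) (hγα : γ ≠ α) :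
    let G' : SimpleGraph (V ⊕ Fin 3) := SimpleGraph.fromEdgeSet
      ((Sym2.map Sum.inl '' G.edgeSet) ∪
        {s(Sum.inl u₁, Sum.inr 0), s(Sum.inr 0, Sum.inr 1), s(Sum.inr 1, Sum.inr 2),
          s(Sum.inr 2, Sum.inl u₂)})
    let L' : V ⊕ Fin 3 → Set (Fin q) :=
      Sum.elim L fun i => if i = 0 then {α, β} else if i = 1 then {β, γ} else {α, γ}
    ∀ c : V → Fin q, ProperListColoring G L c →
      ((∃ c' : V ⊕ Fin 3 → Fin q,
          ProperListColoring G' L' c' ∧ ∀ v, c' (Sum.inl v) = c v) ↔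
        (c u₁, c u₂) ≠ (α, α)) := by
  intro G' L' c hc
  classical
  constructor
  · rintro ⟨c', ⟨hmem, hadj⟩, hext⟩ hpair
    have h1 : c u₁ = α := congrArg Prod.fst hpair
    have h2 : c u₂ = α := congrArg Prod.snd hpair
    have adj01 : G'.Adj (Sum.inl u₁) (Sum.inr 0) := by
      rw [SimpleGraph.fromEdgeSet_adj]; exact ⟨Or.inr (by simp), by simp⟩
    have adj12 : G'.Adj (Sum.inr 0) (Sum.inr 1) := by
      rw [SimpleGraph.fromEdgeSet_adj]; exact ⟨Or.inr (by simp), by simp⟩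
    have adj23 : G'.Adj (Sum.inr 1) (Sum.inr 2) := by
      rw [SimpleGraph.fromEdgeSet_adj]; exact ⟨Or.inr (by simp), by simp⟩
    have adj3u : G'.Adj (Sum.inr 2) (Sum.inl u₂) := by
      rw [SimpleGraph.fromEdgeSet_adj]; exact ⟨Or.inr (by simp), by simp⟩
    have m0 := hmem (Sum.inr 0)
    have m1 := hmem (Sum.inr 1)
    have m2 := hmem (Sum.inr 2)
    simp [L'] at m0 m1 m2
    have e1 : c' (Sum.inr 0) = β := by
      rcases m0 with h | h
      · exact absurd h (by have := hadj _ _ adj01; rw [hext, h1] at this; exact (Ne.symm this))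
      · exact h
    have e2 : c' (Sum.inr 1) = γ := by
      rcases m1 with h | h
      · exact absurd h (by have := hadj _ _ adj12; rw [e1] at this; exact (Ne.symm this))
      · exact h
    have e3 : c' (Sum.inr 2) = α := by
      rcases m2 with h | h
      · exact h
      · exact absurd h (by have := hadj _ _ adj23; rw [e2] at this; exact (Ne.symm this))
    have := hadj _ _ adj3u
    rw [e3, hext, h2] at this
    exact this rfl
  · intro hpair
    by_cases hc2 : c u₂ = α
    · have hc1 : c u₁ ≠ α := fun h => hpair (by rw [h, hc2])
      refine ⟨Sum.elim c ![α, β, γ], ⟨?_, ?_⟩, fun v => rfl⟩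
      · rintro (v | i)
        · exact hc.1 v
        · fin_cases i <;> simp [L']
      · intro a b hab
        rw [SimpleGraph.fromEdgeSet_adj] at hab
        obtain ⟨hs, hne⟩ := hab
        rcases hs with ⟨e, he, hmap⟩ | hs
        · induction e using Sym2.ind with
          | _ x y =>
            rw [Sym2.map_pair_eq, Sym2.eq_iff] at hmap
            rcases hmap with ⟨ha, hb⟩ | ⟨ha, hb⟩ <;> subst ha <;> subst hb <;>
              simp only [Sum.elim_inl] <;>
              [exact hc.2 x y (G.mem_edgeSet.mp he);
               exact hc.2 y x (G.adj_symm (G.mem_edgeSet.mp he))]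
        · simp only [Set.mem_insert_iff, Set.mem_singleton_iff, Sym2.eq_iff] at hs
          rcases hs with (⟨ha,hb⟩|⟨ha,hb⟩)|(⟨ha,hb⟩|⟨ha,hb⟩)|(⟨ha,hb⟩|⟨ha,hb⟩)|(⟨ha,hb⟩|⟨ha,hb⟩) <;>
            subst ha <;> subst hb <;>
            simp_all [Sum.elim_inl, Sum.elim_inr, hc1, hc2, hβγ, hβα, hγα, Ne.symm hβγ,
              Ne.symm hβα, Ne.symm hγα, Ne.symm hc1]
    · refine ⟨Sum.elim c ![if c u₁ = α then β else α, γ, α], ⟨?_, ?_⟩, fun v => rfl⟩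
      · rintro (v | i)
        · exact hc.1 v
        · fin_cases i <;> by_cases h : c u₁ = α <;> simp [L', h]
      · intro a b hab
        rw [SimpleGraph.fromEdgeSet_adj] at hab
        obtain ⟨hs, hne⟩ := hab
        rcases hs with ⟨e, he, hmap⟩ | hs
        · induction e using Sym2.ind with
          | _ x y =>
            rw [Sym2.map_pair_eq, Sym2.eq_iff] at hmap
            rcases hmap with ⟨ha, hb⟩ | ⟨ha, hb⟩ <;> subst ha <;> subst hb <;>
              simp only [Sum.elim_inl] <;>
              [exact hc.2 x y (G.mem_edgeSet.mp he);
               exact hc.2 y x (G.adj_symm (G.mem_edgeSet.mp he))]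
        · simp only [Set.mem_insert_iff, Set.mem_singleton_iff, Sym2.eq_iff] at hs
          rcases hs with (⟨ha,hb⟩|⟨ha,hb⟩)|(⟨ha,hb⟩|⟨ha,hb⟩)|(⟨ha,hb⟩|⟨ha,hb⟩)|(⟨ha,hb⟩|⟨ha,hb⟩) <;>
            subst ha <;> subst hb <;> by_cases h : c u₁ = α <;>
            simp_all [h, hβγ, hβα, hγα, Ne.symm hβγ, Ne.symm hβα, Ne.symm hγα, hc2, Ne.symm hc2] <;> exact fun hh => h hh.symm
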